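/- Let s, y ∈ ℝⁿ be nonzero with sᵀy > 0, λ > 0, t > 0, and Q = λI - (λ/2)(y sᵀ)/(yᵀs) - (λ/2)(s yᵀ)/(yᵀs) + t(s sᵀ)/(yᵀs). Then tr(QᵀQ) = λ²(n - 3/2) + (λ²/2)·(‖s‖²‖y‖²)/(sᵀy)² + t²·‖s‖⁴/(sᵀy)². -/

import Mathlib

open Matrix

lemma aux_transpose_vecMulVec (n : ℕ) (a b : Fin n → ℝ) :
    (vecMulVec a b)ᵀ = vecMulVec b a := by
  ext i j; simp [vecMulVec_apply, mul_comm]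

lemma aux_trace_vecMulVec (n : ℕ) (a b : Fin n → ℝ) :
    Matrix.trace (vecMulVec a b) = a ⬝ᵥ b := by
  simp [Matrix.trace, Matrix.diag, vecMulVec_apply, dotProduct]

lemma aux_vecMulVec_mul (n : ℕ) (a b c d : Fin n → ℝ) :
    vecMulVec a b * vecMulVec c d = (b ⬝ᵥ c) • vecMulVec a d := by
  ext i j
  simp [Matrix.mul_apply, vecMulVec_apply, dotProduct, Finset.mul_sum, Finset.sum_mul]
  ring_nf
  congr 1; ext k; ring

theorem stmt_1 (n : ℕ) (hn : 1 ≤ n) (s y : Fin n → ℝ) (hs : s ≠ 0) (hy : y ≠ 0)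
    (hsy : 0 < s ⬝ᵥ y) (lam t : ℝ) (hlam : 0 < lam) (ht : 0 < t)
    (Q : Matrix (Fin n) (Fin n) ℝ)
    (hQ : Q = lam • (1 : Matrix (Fin n) (Fin n) ℝ)
      - (lam / 2 / (y ⬝ᵥ s)) • vecMulVec y s
      - (lam / 2 / (y ⬝ᵥ s)) • vecMulVec s y
      + (t / (y ⬝ᵥ s)) • vecMulVec s s) :
    Matrix.trace (Qᵀ * Q)
      = lam ^ 2 * (n - 3 / 2)
        + lam ^ 2 / 2 * ((s ⬝ᵥ s) * (y ⬝ᵥ y)) / (s ⬝ᵥ y) ^ 2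
        + t ^ 2 * (s ⬝ᵥ s) ^ 2 / (s ⬝ᵥ y) ^ 2 := by
  have hys : y ⬝ᵥ s = s ⬝ᵥ y := dotProduct_comm y s
  have hne : s ⬝ᵥ y ≠ 0 := ne_of_gt hsy
  subst hQ
  simp only [sub_eq_add_neg, transpose_add, transpose_neg, transpose_smul, transpose_one,
    aux_transpose_vecMulVec, add_mul, mul_add, neg_mul, mul_neg, neg_neg,
    Matrix.trace_add, Matrix.trace_neg, Matrix.smul_mul, Matrix.mul_smul,
    Matrix.trace_smul, Matrix.one_mul, Matrix.mul_one, aux_vecMulVec_mul,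
    aux_trace_vecMulVec, smul_smul, smul_eq_mul, Matrix.trace_one, Fintype.card_fin]
  simp only [hys]
  field_simp
  ring
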